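/- Let f be a total colouring of G × K₂ with K₂ = {z₁, z₂}, let H be bipartite with parts X and Y, and let C be a matching in H. Then the colouring of G × H that assigns each vertex (v,x), x ∈ X, the colour f((v,z₁)); each vertex (v,y), y ∈ Y, the colour f((v,z₂)); and each edge (v,x)(v',y) with xy ∈ C the colour f((v,z₁)(v',z₂)), is a partial total colouring: no two adjacent vertices, no two incident coloured edges, and no coloured edge and its endpoint receive the same colour. -/

import Mathlib

open SimpleGraph

variable {V : Type*} {W : Type*}

/-- The direct (tensor) product of two simple graphs. -/
def tensorProd (G : SimpleGraph V) (H : SimpleGraph W) : SimpleGraph (V × W) where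
  Adj a b := G.Adj a.1 b.1 ∧ H.Adj a.2 b.2
  symm := ⟨fun _ _ h => ⟨G.adj_symm h.1, H.adj_symm h.2⟩⟩
  loopless := ⟨fun _ h => G.irrefl h.1⟩

instance tensorProd.adjDecidable (G : SimpleGraph V) (H : SimpleGraph W)
    [DecidableRel G.Adj] [DecidableRel H.Adj] : DecidableRel (tensorProd G H).Adj :=
  fun _ _ => instDecidableAnd

/-- A proper edge colouring with `n` colours, given as a symmetric function on adjacent pairs. -/
def IsEdgeColoring (G : SimpleGraph V) (n : ℕ) (ce : V → V → Fin n) : Prop :=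
  (∀ u v, G.Adj u v → ce u v = ce v u) ∧
  (∀ u v w, G.Adj u v → G.Adj u w → v ≠ w → ce u v ≠ ce u w)

/-- A proper total colouring with `n` colours. -/
def IsTotalColoring (G : SimpleGraph V) (n : ℕ) (cv : V → Fin n) (ce : V → V → Fin n) : Prop :=
  (∀ u v, G.Adj u v → ce u v = ce v u) ∧
  (∀ u v, G.Adj u v → cv u ≠ cv v) ∧
  (∀ u v w, G.Adj u v → G.Adj u w → v ≠ w → ce u v ≠ ce u w) ∧
  (∀ u v, G.Adj u v → ce u v ≠ cv u ∧ ce u v ≠ cv v)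

/-- The total chromatic number of a graph. -/
noncomputable def totalChromaticNumber (G : SimpleGraph V) : ℕ :=
  sInf {n | ∃ cv ce, IsTotalColoring G n cv ce}

/-- Adjacency of the crown graph. -/
def crownAdj {m : ℕ} : Fin m ⊕ Fin m → Fin m ⊕ Fin m → Prop
  | Sum.inl k, Sum.inr t => k ≠ t
  | Sum.inr k, Sum.inl t => k ≠ t
  | _, _ => False

/-- The crown graph `J_{2m}`: `K_{m,m}` minus a perfect matching. -/
def crown (m : ℕ) : SimpleGraph (Fin m ⊕ Fin m) where
  Adj := crownAdj
  symm := ⟨by rintro (k|k) (t|t) h <;> simp only [crownAdj] at * <;> exact fun e => h e.symm⟩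
  loopless := ⟨by rintro (k|k) h <;> simp only [crownAdj] at h⟩

instance crown.adjDecidable (m : ℕ) : DecidableRel (crown m).Adj := fun a b =>
  match a, b with
  | Sum.inl k, Sum.inr t => (inferInstance : Decidable (k ≠ t))
  | Sum.inr k, Sum.inl t => (inferInstance : Decidable (k ≠ t))
  | Sum.inl _, Sum.inl _ => isFalse (fun h => h)
  | Sum.inr _, Sum.inr _ => isFalse (fun h => h)

theorem partial_total_coloring_transfer {nc : ℕ} (G : SimpleGraph V) (H : SimpleGraph W)
    (cv : V × Fin 2 → Fin nc) (ce : V × Fin 2 → V × Fin 2 → Fin nc)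
    (hf : IsTotalColoring (tensorProd G (⊤ : SimpleGraph (Fin 2))) nc cv ce)
    (side : W → Bool)
    (hside : ∀ x y, H.Adj x y → side x ≠ side y)
    (M : W → W → Prop)
    (hM : ∀ x y, M x y → H.Adj x y ∧ side x = true ∧ side y = false)
    (hMatch : ∀ x y x' y', M x y → M x' y' → (x = x' ↔ y = y')) :
    (∀ v v' x y, G.Adj v v' → H.Adj x y →
        (if side x then cv (v, 0) else cv (v, 1)) ≠
          (if side y then cv (v', 0) else cv (v', 1))) ∧
    (∀ v v' u u' x y x' y', G.Adj v v' → G.Adj u u' → M x y → M x' y' →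
        ((v, x) = (u, x') ∨ (v', y) = (u', y')) →
        ¬((v, x) = (u, x') ∧ (v', y) = (u', y')) →
        ce (v, 0) (v', 1) ≠ ce (u, 0) (u', 1)) ∧
    (∀ v v' x y, G.Adj v v' → M x y →
        ce (v, 0) (v', 1) ≠ (if side x then cv (v, 0) else cv (v, 1)) ∧
        ce (v, 0) (v', 1) ≠ (if side y then cv (v', 0) else cv (v', 1))) := by
  obtain ⟨hsym, hv, he, hev⟩ := hf
  have adj01 : ∀ v v', G.Adj v v' → (tensorProd G (⊤ : SimpleGraph (Fin 2))).Adj (v, 0) (v', 1) :=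
    fun v v' h => ⟨h, (by decide : (0:Fin 2) ≠ 1)⟩
  refine ⟨?_, ?_, ?_⟩
  · intro v v' x y hG hH
    have hs := hside x y hH
    cases hx : side x <;> cases hy : side y <;> rw [hx, hy] at hs <;> simp at hs ⊢
    · exact hv (v, 1) (v', 0) ⟨hG, (by decide : (1:Fin 2) ≠ 0)⟩
    · exact hv (v, 0) (v', 1) ⟨hG, (by decide : (0:Fin 2) ≠ 1)⟩
  · intro v v' u u' x y x' y' hG hG' hxy hxy' hor hnand
    rcases hor with h1 | h1
    · obtain ⟨rfl, rfl⟩ := Prod.mk.injEq .. ▸ h1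
      have hyy : y = y' := (hMatch _ _ _ _ hxy hxy').mp rfl
      have hne : v' ≠ u' := fun h => hnand ⟨rfl, by rw [h, hyy]⟩
      exact he (v, 0) (v', 1) (u', 1) (adj01 _ _ hG) (adj01 _ _ hG')
        (fun h => hne (congrArg Prod.fst h))
    · obtain ⟨rfl, rfl⟩ := Prod.mk.injEq .. ▸ h1
      have hxx : x = x' := (hMatch _ _ _ _ hxy hxy').mpr rfl
      have hne : v ≠ u := fun h => hnand ⟨by rw [h, hxx], rfl⟩
      have a1 := adj01 _ _ hG
      have a2 := adj01 _ _ hG'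
      rw [hsym _ _ a1, hsym _ _ a2]
      exact he (v', 1) (v, 0) (u, 0) a1.symm a2.symm
        (fun h => hne (congrArg Prod.fst h))
  · intro v v' x y hG hxy
    obtain ⟨-, hx, hy⟩ := hM _ _ hxy
    rw [hx, hy]
    simpa using hev (v, 0) (v', 1) (adj01 _ _ hG)
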